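/- Let N ≥ 2 and let Ω = 𝕋^{N−1} × (0,1) with 𝕋^{N−1} = ℝ^{N−1}/ℤ^{N−1} the flat torus with its Haar (Lebesgue) measure; write x = (x′, x_N) and d(x) = min(x_N, 1−x_N). Let φ : (0,1/2) → (0,∞) satisfy φ(ε) → ∞ and ε·φ(ε) → κ ∈ (0,∞) as ε → 0⁺, and set b_ε(x) = 1 if d(x) ≥ ε, b_ε(x) = φ(ε) if d(x) < ε. Let M < ∞ and let (u^ε)_{ε∈(0,1/2)} ⊂ L²(Ω) satisfy ∫_Ω b_ε (u^ε)² dx ≤ M for all ε, u^ε → u₀ in L²(Ω), and (1/ε)∫₀^ε u^ε(·, s) ds → w⁰ and (1/ε)∫_{1−ε}^1 u^ε(·, s) ds → w¹ in L²(𝕋^{N−1}) as ε → 0⁺. Then for every continuous function f on 𝕋^{N−1} × [0,1]: ∫_Ω b_ε u^ε f dx → ∫_Ω u₀ f dx + κ ∫_{𝕋^{N−1}} w⁰(x′) f(x′, 0) dx′ + κ ∫_{𝕋^{N−1}} w¹(x′) f(x′, 1) dx′ as ε → 0⁺. -/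

import Mathlib

open MeasureTheory
open scoped ENNReal
noncomputable section

/-- Fundamental domain `[0,1)^n` of the flat torus `𝕋^n = ℝ^n/ℤ^n`. -/
def unitBox (n : ℕ) : Set (Fin n → ℝ) := Set.univ.pi fun _ => Set.Ico (0:ℝ) 1

/-- The flat cylinder `Ω = 𝕋^n × (0,1)`, realized as the fundamental domain
`[0,1)^n × (0,1)` inside `ℝ^n × ℝ`. -/
def cyl (n : ℕ) : Set ((Fin n → ℝ) × ℝ) := (unitBox n) ×ˢ Set.Ioo (0:ℝ) 1

/-- The boundary-layer weight `b_ε`: equal to `1` on `Ω_ε = {d(x) ≥ ε}` and to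
`φ(ε)` on the boundary layer `{d(x) < ε}`, where `d(x) = min(x_N, 1 − x_N)`. -/
def bWt (φε ε : ℝ) {n : ℕ} (p : (Fin n → ℝ) × ℝ) : ℝ :=
  if ε ≤ min p.2 (1 - p.2) then 1 else φε


/-- Workhorse Cauchy–Schwarz bound, no integrability needed. -/
lemma cs_bound {α : Type*} [MeasurableSpace α] (μ : Measure α)
    {h g : α → ℝ} (hh : AEMeasurable h μ)
    {A C V : ℝ} (hA0 : 0 ≤ A) (hC : 0 ≤ C) (hV0 : 0 ≤ V)
    (hA : ∫⁻ a, ENNReal.ofReal (h a ^ 2) ∂μ ≤ ENNReal.ofReal A)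
    (hV : μ Set.univ ≤ ENNReal.ofReal V)
    (hg : ∀ᵐ a ∂μ, |g a| ≤ C) :
    |∫ a, h a * g a ∂μ| ≤ C * Real.sqrt (A * V) := by
  have h1 : |∫ a, h a * g a ∂μ| ≤ (∫⁻ a, ENNReal.ofReal ‖h a * g a‖ ∂μ).toReal := by
    simpa using norm_integral_le_lintegral_norm (μ := μ) (fun a => h a * g a)
  have h2 : ∫⁻ a, ENNReal.ofReal ‖h a * g a‖ ∂μ
      ≤ (∫⁻ a, ENNReal.ofReal |h a| ∂μ) * ENNReal.ofReal C := by
    rw [← lintegral_mul_const' (ENNReal.ofReal C) _ (by simp)]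
    refine lintegral_mono_ae ?_
    filter_upwards [hg] with a ha
    rw [Real.norm_eq_abs, abs_mul, ← ENNReal.ofReal_mul (abs_nonneg _)]
    exact ENNReal.ofReal_le_ofReal (mul_le_mul_of_nonneg_left ha (abs_nonneg _))
  have hconj : Real.HolderConjugate 2 2 := by constructor <;> norm_num
  have h3 : ∫⁻ a, ENNReal.ofReal |h a| ∂μ
      ≤ (ENNReal.ofReal A) ^ (1/2 : ℝ) * (ENNReal.ofReal V) ^ (1/2 : ℝ) := by
    have hol := ENNReal.lintegral_mul_le_Lp_mul_Lq μ hconj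
      (f := fun a => ENNReal.ofReal |h a|) (g := fun _ => 1)
      ((hh.norm.congr (Filter.Eventually.of_forall fun a => Real.norm_eq_abs (h a))).ennreal_ofReal)
      aemeasurable_const
    simp only [Pi.mul_apply, mul_one, ENNReal.one_rpow] at hol
    calc ∫⁻ a, ENNReal.ofReal |h a| ∂μ
        ≤ (∫⁻ a, ENNReal.ofReal |h a| ^ (2:ℝ) ∂μ) ^ (1/2:ℝ) * (∫⁻ _, (1:ℝ≥0∞) ∂μ) ^ (1/2:ℝ) := hol
      _ ≤ (ENNReal.ofReal A) ^ (1/2 : ℝ) * (ENNReal.ofReal V) ^ (1/2 : ℝ) := by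
          gcongr
          · refine le_trans (le_of_eq ?_) hA
            refine lintegral_congr fun a => ?_
            rw [ENNReal.ofReal_rpow_of_nonneg (abs_nonneg _) (by norm_num)]
            rw [show (2:ℝ) = ((2:ℕ):ℝ) from by norm_num, Real.rpow_natCast, sq_abs]
          · simpa using hV
  calc |∫ a, h a * g a ∂μ|
      ≤ (∫⁻ a, ENNReal.ofReal ‖h a * g a‖ ∂μ).toReal := h1
    _ ≤ (((ENNReal.ofReal A) ^ (1/2 : ℝ) * (ENNReal.ofReal V) ^ (1/2 : ℝ)) * ENNReal.ofReal C).toReal := by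
        apply ENNReal.toReal_mono
        · exact ENNReal.mul_ne_top (ENNReal.mul_ne_top (by simp [ENNReal.rpow_ne_top_of_nonneg]) (by simp [ENNReal.rpow_ne_top_of_nonneg])) (by simp)
        · exact le_trans h2 (mul_le_mul_left h3 _)
    _ = C * Real.sqrt (A * V) := by
        rw [ENNReal.toReal_mul, ENNReal.toReal_mul, ← ENNReal.toReal_rpow, ← ENNReal.toReal_rpow,
          ENNReal.toReal_ofReal hA0, ENNReal.toReal_ofReal hV0, ENNReal.toReal_ofReal hC,
          ← Real.sqrt_eq_rpow, ← Real.sqrt_eq_rpow, ← Real.sqrt_mul hA0]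
        ring

lemma sq_lintegral_eq {α : Type*} [MeasurableSpace α] (μ : Measure α) (h : α → ℝ) :
    ∫⁻ a, (‖h a‖₊ : ℝ≥0∞) ^ (2:ℝ) ∂μ = ∫⁻ a, ENNReal.ofReal (h a ^ 2) ∂μ := by
  refine lintegral_congr fun a => ?_
  rw [show (2:ℝ) = ((2:ℕ):ℝ) from by norm_num, ENNReal.rpow_natCast,
    ← ENNReal.coe_pow, ← nnnorm_pow]
  exact Real.enorm_eq_ofReal (sq_nonneg _)

lemma integrable_of_sq {α : Type*} [MeasurableSpace α] {μ : Measure α} {h : α → ℝ}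
    (hh : AEMeasurable h μ) (hfin : ∫⁻ a, ENNReal.ofReal (h a ^ 2) ∂μ ≠ ⊤)
    (hμ : μ Set.univ ≠ ⊤) : Integrable h μ := by
  have : IsFiniteMeasure μ := ⟨lt_top_iff_ne_top.2 hμ⟩
  refine MemLp.integrable one_le_two ⟨hh.aestronglyMeasurable, ?_⟩
  rw [eLpNorm_eq_lintegral_rpow_enorm_toReal (by norm_num) (by norm_num)]
  simp only [ENNReal.toReal_ofNat]
  rw [show (∫⁻ x, ‖h x‖ₑ ^ (2:ℝ) ∂μ) = ∫⁻ a, ENNReal.ofReal (h a ^ 2) ∂μ from sq_lintegral_eq μ h]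
  exact ENNReal.rpow_lt_top_of_nonneg (by norm_num) hfin

lemma MeasureTheory.Integrable.mul_bdd_abs {α : Type*} [MeasurableSpace α] {μ : Measure α} {h g : α → ℝ}
    (hh : Integrable h μ) (hg : AEStronglyMeasurable g μ) {C : ℝ}
    (hbd : ∀ᵐ x ∂μ, |g x| ≤ C) : Integrable (fun x => h x * g x) μ := by
  refine hh.mul_bdd (c := C) hg ?_
  simpa [Real.norm_eq_abs] using hbd

lemma measurableSet_unitBox (n : ℕ) : MeasurableSet (unitBox n) :=
  MeasurableSet.univ_pi fun _ => measurableSet_Ico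

lemma volume_unitBox (n : ℕ) : volume (unitBox n) = 1 := by
  rw [unitBox, volume_pi_pi]; simp

lemma volume_boxprod (n : ℕ) (s : Set ℝ) : volume (unitBox n ×ˢ s) = volume s := by
  rw [MeasureTheory.Measure.volume_eq_prod, Measure.prod_prod, volume_unitBox, one_mul]

lemma unitBox_subset_Icc (n : ℕ) : unitBox n ⊆ Set.Icc (0:Fin n → ℝ) 1 := by
  intro x hx
  constructor
  · intro i; exact (hx i trivial).1
  · intro i; exact le_of_lt (hx i trivial).2

set_option maxHeartbeats 2000000 in
lemma layer_limit (n : ℕ) {κ : ℝ} (hκ : 0 < κ) {φ : ℝ → ℝ}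
    (hφ_pos : ∀ ε ∈ Set.Ioo (0:ℝ) (1/2), 0 < φ ε)
    (hφκ : Filter.Tendsto (fun ε => ε * φ ε) (nhdsWithin 0 (Set.Ioo 0 (1/2))) (nhds κ))
    {Mp : ℝ} (hMp : 0 ≤ Mp)
    {u : ℝ → ((Fin n → ℝ) × ℝ) → ℝ} (hu_meas : ∀ ε ∈ Set.Ioo (0:ℝ) (1/2), Measurable (u ε))
    {a b : ℝ → ℝ} {t : ℝ} (ht : t ∈ Set.Icc (0:ℝ) 1)
    (hsub : ∀ ε ∈ Set.Ioo (0:ℝ) (1/2), Set.Ioo (a ε) (b ε) ⊆ Set.Icc 0 1)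
    (hdiff : ∀ ε ∈ Set.Ioo (0:ℝ) (1/2), b ε - a ε = ε)
    (hdist : ∀ ε ∈ Set.Ioo (0:ℝ) (1/2), ∀ s ∈ Set.Ioo (a ε) (b ε), |s - t| ≤ ε)
    (hL2 : ∀ ε ∈ Set.Ioo (0:ℝ) (1/2),
      ∫⁻ p in unitBox n ×ˢ Set.Ioo (a ε) (b ε), ENNReal.ofReal ((u ε p) ^ 2)
        ≤ ENNReal.ofReal (Mp / φ ε))
    {w : (Fin n → ℝ) → ℝ} (hw_meas : Measurable w)
    (hw_L2 : ∫⁻ x' in unitBox n, ENNReal.ofReal ((w x') ^ 2) < ⊤)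
    (havg : Filter.Tendsto
      (fun ε => ∫⁻ x' in unitBox n,
        ENNReal.ofReal (((1/ε) * (∫ s in Set.Ioc (a ε) (b ε), u ε (x', s)) - w x') ^ 2))
      (nhdsWithin 0 (Set.Ioo 0 (1/2))) (nhds 0))
    {f : (Fin n → ℝ) × ℝ → ℝ} (hf : Continuous f) :
    Filter.Tendsto (fun ε => ∫ p in unitBox n ×ˢ Set.Ioo (a ε) (b ε), u ε p * f p)
      (nhdsWithin 0 (Set.Ioo 0 (1/2))) (nhds 0) ∧
    Filter.Tendsto (fun ε => φ ε * ∫ p in unitBox n ×ˢ Set.Ioo (a ε) (b ε), u ε p * f p)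
      (nhdsWithin 0 (Set.Ioo 0 (1/2))) (nhds (κ * ∫ x' in unitBox n, w x' * f (x', t))) := by
  have hIoo : MeasurableSet (Set.Ioo (0:ℝ) (1/2)) := measurableSet_Ioo
  set F := nhdsWithin (0:ℝ) (Set.Ioo 0 (1/2)) with hF
  set K : Set ((Fin n → ℝ) × ℝ) := Set.Icc (0:Fin n → ℝ) 1 ×ˢ Set.Icc (0:ℝ) 1 with hK
  have hKcp : IsCompact K := isCompact_Icc.prod isCompact_Icc
  obtain ⟨C0, hC0⟩ := hKcp.exists_bound_of_continuousOn hf.continuousOn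
  set C := max C0 0 with hCdef
  have hC : 0 ≤ C := le_max_right _ _
  have hfK : ∀ p ∈ K, |f p| ≤ C := fun p hp => le_trans (by
    simpa [Real.norm_eq_abs] using hC0 p hp) (le_max_left _ _)
  -- basic facts
  have hSmeas : ∀ ε : ℝ, MeasurableSet (unitBox n ×ˢ Set.Ioo (a ε) (b ε)) :=
    fun ε => (measurableSet_unitBox n).prod measurableSet_Ioo
  have hSvol : ∀ ε ∈ Set.Ioo (0:ℝ) (1/2),
      volume (unitBox n ×ˢ Set.Ioo (a ε) (b ε)) = ENNReal.ofReal ε := by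
    intro ε hε
    rw [volume_boxprod, Real.volume_Ioo, hdiff ε hε]
  have hSK : ∀ ε ∈ Set.Ioo (0:ℝ) (1/2), (unitBox n ×ˢ Set.Ioo (a ε) (b ε)) ⊆ K := by
    intro ε hε p hp
    exact ⟨unitBox_subset_Icc n hp.1, hsub ε hε hp.2⟩
  have hfae : ∀ ε ∈ Set.Ioo (0:ℝ) (1/2),
      ∀ᵐ p ∂(volume.restrict (unitBox n ×ˢ Set.Ioo (a ε) (b ε))), |f p| ≤ C := by
    intro ε hε
    exact ae_restrict_of_forall_mem (hSmeas ε) (fun p hp => hfK p (hSK ε hε hp))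
  have htK : ∀ x' ∈ unitBox n, ((x', t) : (Fin n → ℝ) × ℝ) ∈ K :=
    fun x' hx' => ⟨unitBox_subset_Icc n hx', ht⟩
  have hgae : ∀ ε : ℝ, ∀ᵐ p ∂(volume.restrict (unitBox n ×ˢ Set.Ioo (a ε) (b ε))),
      |f (p.1, t)| ≤ C := by
    intro ε
    exact ae_restrict_of_forall_mem (hSmeas ε) (fun p hp => hfK _ (htK p.1 hp.1))
  have hgae' : ∀ᵐ x' ∂(volume.restrict (unitBox n)), |f (x', t)| ≤ C :=
    ae_restrict_of_forall_mem (measurableSet_unitBox n) (fun x' hx' => hfK _ (htK x' hx'))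
  have hgcont : Continuous (fun x' : Fin n → ℝ => f (x', t)) :=
    hf.comp (continuous_id.prodMk continuous_const)
  -- tendsto of identity
  have hid : Filter.Tendsto (fun ε : ℝ => ε) F (nhds 0) :=
    Filter.tendsto_id.mono_right nhdsWithin_le_nhds
  have hmem : ∀ᶠ ε in F, ε ∈ Set.Ioo (0:ℝ) (1/2) := self_mem_nhdsWithin
  -- CS bound on the layer
  have hJbd : ∀ ε ∈ Set.Ioo (0:ℝ) (1/2),
      |∫ p in unitBox n ×ˢ Set.Ioo (a ε) (b ε), u ε p * f p|
        ≤ C * Real.sqrt (Mp / φ ε * ε) := by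
    intro ε hε
    refine cs_bound _ ((hu_meas ε hε).aemeasurable) (div_nonneg hMp (hφ_pos ε hε).le) hC hε.1.le
      (hL2 ε hε) ?_ (hfae ε hε)
    rw [Measure.restrict_apply_univ, hSvol ε hε]
  -- Part 1 : J → 0
  have hpart1 : Filter.Tendsto (fun ε => ∫ p in unitBox n ×ˢ Set.Ioo (a ε) (b ε), u ε p * f p)
      F (nhds 0) := by
    have hlim : Filter.Tendsto (fun ε => C * Real.sqrt (Mp * (ε * ε) * (ε * φ ε)⁻¹)) F
        (nhds (C * Real.sqrt (Mp * ((0:ℝ) * 0) * κ⁻¹))) :=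
      tendsto_const_nhds.mul
        (((tendsto_const_nhds.mul (hid.mul hid)).mul (hφκ.inv₀ hκ.ne')).sqrt)
    have hlim0 : Filter.Tendsto (fun ε => C * Real.sqrt (Mp * (ε * ε) * (ε * φ ε)⁻¹)) F
        (nhds 0) := by simpa using hlim
    refine squeeze_zero_norm' ?_ hlim0
    filter_upwards [hmem] with ε hε
    have hε0 : ε ≠ 0 := ne_of_gt hε.1
    have hφ0 : φ ε ≠ 0 := ne_of_gt (hφ_pos ε hε)
    have h1 : Mp / φ ε * ε = Mp * (ε * ε) * (ε * φ ε)⁻¹ := by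
      field_simp
    rw [Real.norm_eq_abs, ← h1]
    exact hJbd ε hε
  refine ⟨hpart1, ?_⟩
  -- integrability facts
  have huS : ∀ ε ∈ Set.Ioo (0:ℝ) (1/2),
      IntegrableOn (u ε) (unitBox n ×ˢ Set.Ioo (a ε) (b ε)) := by
    intro ε hε
    refine integrable_of_sq ((hu_meas ε hε).aemeasurable) (ne_top_of_le_ne_top (by simp) (hL2 ε hε)) ?_
    rw [Measure.restrict_apply_univ, hSvol ε hε]; simp
  have hufS : ∀ ε ∈ Set.Ioo (0:ℝ) (1/2),
      IntegrableOn (fun p => u ε p * f p) (unitBox n ×ˢ Set.Ioo (a ε) (b ε)) :=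
    fun ε hε => (huS ε hε).mul_bdd_abs hf.aestronglyMeasurable.restrict (hfae ε hε)
  have hugS : ∀ ε ∈ Set.Ioo (0:ℝ) (1/2),
      IntegrableOn (fun p => u ε p * f (p.1, t)) (unitBox n ×ˢ Set.Ioo (a ε) (b ε)) :=
    fun ε hε => (huS ε hε).mul_bdd_abs
      ((hgcont.comp continuous_fst).aestronglyMeasurable.restrict) (hgae ε)
  -- restriction to Ioc equals restriction to Ioo
  have hrestr : ∀ ε : ℝ, (volume : Measure ((Fin n → ℝ) × ℝ)).restrict
        (unitBox n ×ˢ Set.Ioc (a ε) (b ε))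
      = (volume : Measure ((Fin n → ℝ) × ℝ)).restrict (unitBox n ×ˢ Set.Ioo (a ε) (b ε)) := by
    intro ε
    rw [MeasureTheory.Measure.volume_eq_prod, ← Measure.prod_restrict, ← Measure.prod_restrict,
      Measure.restrict_congr_set (Filter.EventuallyEq.symm Ioo_ae_eq_Ioc)]
  have hwInt : IntegrableOn w (unitBox n) := by
    refine integrable_of_sq hw_meas.aemeasurable hw_L2.ne ?_
    rw [Measure.restrict_apply_univ, volume_unitBox]; simp
  have hwg : IntegrableOn (fun x' => w x' * f (x', t)) (unitBox n) :=
    hwInt.mul_bdd_abs hgcont.aestronglyMeasurable.restrict hgae'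
  have hBmeas : ∀ ε ∈ Set.Ioo (0:ℝ) (1/2), Measurable
      (fun x' => (1/ε) * ∫ s in Set.Ioc (a ε) (b ε), u ε (x', s)) := by
    intro ε hε
    exact (((hu_meas ε hε).stronglyMeasurable.integral_prod_right').measurable).const_mul _
  have hBint : ∀ ε ∈ Set.Ioo (0:ℝ) (1/2),
      IntegrableOn (fun x' => (1/ε) * ∫ s in Set.Ioc (a ε) (b ε), u ε (x', s)) (unitBox n) := by
    intro ε hε
    have h1 : IntegrableOn (u ε) (unitBox n ×ˢ Set.Ioc (a ε) (b ε)) := by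
      rw [IntegrableOn, hrestr ε]; exact huS ε hε
    have h2 : Integrable (u ε)
        ((volume.restrict (unitBox n)).prod (volume.restrict (Set.Ioc (a ε) (b ε)))) := by
      rwa [Measure.prod_restrict, ← MeasureTheory.Measure.volume_eq_prod]
    exact (h2.integral_prod_left).const_mul _
  have hAg : ∀ ε ∈ Set.Ioo (0:ℝ) (1/2), IntegrableOn
      (fun x' => ((1/ε) * ∫ s in Set.Ioc (a ε) (b ε), u ε (x', s)) * f (x', t)) (unitBox n) :=
    fun ε hε => (hBint ε hε).mul_bdd_abs hgcont.aestronglyMeasurable.restrict hgae'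
  -- Fubini identity
  have hFub : ∀ ε ∈ Set.Ioo (0:ℝ) (1/2),
      (∫ p in unitBox n ×ˢ Set.Ioo (a ε) (b ε), u ε p * f (p.1, t))
        = ε * ∫ x' in unitBox n,
            ((1/ε) * ∫ s in Set.Ioc (a ε) (b ε), u ε (x', s)) * f (x', t) := by
    intro ε hε
    have hint : IntegrableOn (fun p : (Fin n → ℝ) × ℝ => u ε p * f (p.1, t))
        (unitBox n ×ˢ Set.Ioo (a ε) (b ε))
        (((volume : Measure (Fin n → ℝ))).prod (volume : Measure ℝ)) := by
      rw [← MeasureTheory.Measure.volume_eq_prod]; exact hugS ε hε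
    have hin : ∀ x' : Fin n → ℝ,
        (∫ y in Set.Ioo (a ε) (b ε), u ε (x', y) * f ((x', y).1, t))
          = ε * (((1/ε) * ∫ s in Set.Ioc (a ε) (b ε), u ε (x', s)) * f (x', t)) := by
      intro x'
      show (∫ y in Set.Ioo (a ε) (b ε), u ε (x', y) * f (x', t))
          = ε * (((1/ε) * ∫ s in Set.Ioc (a ε) (b ε), u ε (x', s)) * f (x', t))
      rw [integral_mul_const, setIntegral_congr_set (Ioo_ae_eq_Ioc)]
      have hε0 : (ε:ℝ) ≠ 0 := ne_of_gt hε.1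
      field_simp
    calc (∫ p in unitBox n ×ˢ Set.Ioo (a ε) (b ε), u ε p * f (p.1, t))
        = ∫ p in unitBox n ×ˢ Set.Ioo (a ε) (b ε), u ε p * f (p.1, t)
            ∂((volume : Measure (Fin n → ℝ)).prod (volume : Measure ℝ)) := by
          rw [← MeasureTheory.Measure.volume_eq_prod]
      _ = ∫ x' in unitBox n, ∫ y in Set.Ioo (a ε) (b ε), u ε (x', y) * f ((x', y).1, t) := by
          rw [setIntegral_prod _ hint]
      _ = ∫ x' in unitBox n, ε * (((1/ε) * ∫ s in Set.Ioc (a ε) (b ε), u ε (x', s)) * f (x', t)) := by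
          simp_rw [hin]
      _ = ε * ∫ x' in unitBox n,
            ((1/ε) * ∫ s in Set.Ioc (a ε) (b ε), u ε (x', s)) * f (x', t) := by
          rw [integral_const_mul]
  -- splitting identity
  have hsplit : ∀ ε ∈ Set.Ioo (0:ℝ) (1/2),
      φ ε * ∫ p in unitBox n ×ˢ Set.Ioo (a ε) (b ε), u ε p * f p
        = φ ε * (∫ p in unitBox n ×ˢ Set.Ioo (a ε) (b ε), u ε p * (f p - f (p.1, t)))
          + (ε * φ ε) * ∫ x' in unitBox n,
              ((1/ε) * ∫ s in Set.Ioc (a ε) (b ε), u ε (x', s)) * f (x', t) := by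
    intro ε hε
    have h1 : (∫ p in unitBox n ×ˢ Set.Ioo (a ε) (b ε), u ε p * (f p - f (p.1, t)))
        = (∫ p in unitBox n ×ˢ Set.Ioo (a ε) (b ε), u ε p * f p)
          - (∫ p in unitBox n ×ˢ Set.Ioo (a ε) (b ε), u ε p * f (p.1, t)) := by
      rw [← integral_sub (hufS ε hε) (hugS ε hε)]
      refine setIntegral_congr_fun (hSmeas ε) (fun p _ => ?_)
      ring
    rw [h1, hFub ε hε]
    ring
  -- Q tendsto
  have hQdiff0 : Filter.Tendsto (fun ε => ∫ x' in unitBox n,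
      (((1/ε) * ∫ s in Set.Ioc (a ε) (b ε), u ε (x', s)) - w x') * f (x', t)) F (nhds 0) := by
    have htR : Filter.Tendsto (fun ε => (∫⁻ x' in unitBox n,
        ENNReal.ofReal (((1/ε) * (∫ s in Set.Ioc (a ε) (b ε), u ε (x', s)) - w x') ^ 2)).toReal)
        F (nhds 0) := by
      have := (ENNReal.tendsto_toReal (a := 0) (by simp)).comp havg
      exact this
    have hlim : Filter.Tendsto (fun ε => C * Real.sqrt ((∫⁻ x' in unitBox n,
        ENNReal.ofReal (((1/ε) * (∫ s in Set.Ioc (a ε) (b ε), u ε (x', s)) - w x') ^ 2)).toReal * 1))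
        F (nhds (C * Real.sqrt ((0:ℝ) * 1))) :=
      tendsto_const_nhds.mul ((htR.mul tendsto_const_nhds).sqrt)
    have h00 : C * Real.sqrt ((0:ℝ) * 1) = 0 := by simp
    refine squeeze_zero_norm' ?_ (h00 ▸ hlim)
    have hfin : ∀ᶠ ε in F, (∫⁻ x' in unitBox n,
        ENNReal.ofReal (((1/ε) * (∫ s in Set.Ioc (a ε) (b ε), u ε (x', s)) - w x') ^ 2)) < ⊤ :=
      havg.eventually_lt_const (by simp)
    filter_upwards [hmem, hfin] with ε hε hfinε
    rw [Real.norm_eq_abs]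
    refine cs_bound (volume.restrict (unitBox n))
      (h := fun x' => ((1/ε) * ∫ s in Set.Ioc (a ε) (b ε), u ε (x', s)) - w x')
      (g := fun x' => f (x', t))
      (A := (∫⁻ x' in unitBox n,
        ENNReal.ofReal (((1/ε) * (∫ s in Set.Ioc (a ε) (b ε), u ε (x', s)) - w x') ^ 2)).toReal)
      (V := 1)
      ?_ ENNReal.toReal_nonneg hC zero_le_one ?_ ?_ hgae'
    · exact (((hBmeas ε hε).sub hw_meas)).aemeasurable
    · rw [ENNReal.ofReal_toReal hfinε.ne]
    · rw [Measure.restrict_apply_univ, volume_unitBox]; simp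
  have hQ : Filter.Tendsto (fun ε => ∫ x' in unitBox n,
      ((1/ε) * ∫ s in Set.Ioc (a ε) (b ε), u ε (x', s)) * f (x', t)) F
      (nhds (∫ x' in unitBox n, w x' * f (x', t))) := by
    have heq : ∀ᶠ ε in F, (∫ x' in unitBox n,
        (((1/ε) * ∫ s in Set.Ioc (a ε) (b ε), u ε (x', s)) - w x') * f (x', t))
          + (∫ x' in unitBox n, w x' * f (x', t))
        = ∫ x' in unitBox n, ((1/ε) * ∫ s in Set.Ioc (a ε) (b ε), u ε (x', s)) * f (x', t) := by
      filter_upwards [hmem] with ε hε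
      have e2 : (∫ x' in unitBox n,
          (((1/ε) * ∫ s in Set.Ioc (a ε) (b ε), u ε (x', s)) - w x') * f (x', t))
          = (∫ x' in unitBox n, ((1/ε) * ∫ s in Set.Ioc (a ε) (b ε), u ε (x', s)) * f (x', t))
            - ∫ x' in unitBox n, w x' * f (x', t) := by
        rw [← integral_sub (hAg ε hε) hwg]
        exact setIntegral_congr_fun (measurableSet_unitBox n) (fun x' _ => by ring)
      rw [e2]
      ring
    have := (hQdiff0.add (tendsto_const_nhds (x := ∫ x' in unitBox n, w x' * f (x', t)))).congr' heq
    simpa using this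
  -- E term tendsto
  have hE : Filter.Tendsto (fun ε => φ ε *
      ∫ p in unitBox n ×ˢ Set.Ioo (a ε) (b ε), u ε p * (f p - f (p.1, t))) F (nhds 0) := by
    rw [Metric.tendsto_nhds]
    intro δ hδ
    set δ' := δ / (Real.sqrt (Mp * (κ + 1)) + 1) with hδ'def
    have hs0 : 0 ≤ Real.sqrt (Mp * (κ + 1)) := Real.sqrt_nonneg _
    have hδ' : 0 < δ' := div_pos hδ (by linarith)
    obtain ⟨η, hη0, hηuc⟩ := (Metric.uniformContinuousOn_iff.1
      (hKcp.uniformContinuousOn_of_continuous hf.continuousOn)) δ' hδ'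
    filter_upwards [hmem, hφκ.eventually_lt_const (lt_add_one κ), hid.eventually_lt_const hη0]
      with ε hε hκε hεη
    have hφε := hφ_pos ε hε
    -- uniform bound on f p - f(p.1,t) over the layer
    have hEbd : |∫ p in unitBox n ×ˢ Set.Ioo (a ε) (b ε), u ε p * (f p - f (p.1, t))|
        ≤ δ' * Real.sqrt (Mp / φ ε * ε) := by
      refine cs_bound _ ((hu_meas ε hε).aemeasurable) (div_nonneg hMp hφε.le) hδ'.le hε.1.le
        (hL2 ε hε) ?_ ?_
      · rw [Measure.restrict_apply_univ, hSvol ε hε]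
      · refine ae_restrict_of_forall_mem (hSmeas ε) (fun p hp => ?_)
        have h1 : p ∈ K := hSK ε hε hp
        have h2 : ((p.1, t) : (Fin n → ℝ) × ℝ) ∈ K := htK p.1 hp.1
        have hd : dist p ((p.1, t) : (Fin n → ℝ) × ℝ) < η := by
          rw [Prod.dist_eq]
          simp only [dist_self]
          rw [Real.dist_eq]
          calc max 0 |p.2 - t| = |p.2 - t| := max_eq_right (abs_nonneg _)
            _ ≤ ε := hdist ε hε p.2 hp.2
            _ < η := hεη
        have := hηuc p h1 _ h2 hd
        rw [Real.dist_eq] at this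
        exact le_of_lt this
    rw [Real.dist_eq, sub_zero]
    have hsq : φ ε * Real.sqrt (Mp / φ ε * ε) = Real.sqrt (Mp * (ε * φ ε)) := by
      rw [show Mp * (ε * φ ε) = (Mp / φ ε * ε) * (φ ε)^2 from by field_simp,
        Real.sqrt_mul (mul_nonneg (div_nonneg hMp hφε.le) hε.1.le) ((φ ε)^2), Real.sqrt_sq hφε.le]
      ring
    calc |φ ε * ∫ p in unitBox n ×ˢ Set.Ioo (a ε) (b ε), u ε p * (f p - f (p.1, t))|
        = φ ε * |∫ p in unitBox n ×ˢ Set.Ioo (a ε) (b ε), u ε p * (f p - f (p.1, t))| := by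
          rw [abs_mul, abs_of_pos hφε]
      _ ≤ φ ε * (δ' * Real.sqrt (Mp / φ ε * ε)) := by
          exact mul_le_mul_of_nonneg_left hEbd hφε.le
      _ = δ' * Real.sqrt (Mp * (ε * φ ε)) := by rw [← hsq]; ring
      _ ≤ δ' * Real.sqrt (Mp * (κ + 1)) := by
          refine mul_le_mul_of_nonneg_left (Real.sqrt_le_sqrt ?_) hδ'.le
          exact mul_le_mul_of_nonneg_left hκε.le hMp
      _ < δ' * (Real.sqrt (Mp * (κ + 1)) + 1) := by nlinarith
      _ = δ := by
          rw [hδ'def]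
          field_simp
  -- assemble
  have hfinal := hE.add ((hφκ.mul hQ))
  rw [zero_add] at hfinal
  refine hfinal.congr' ?_
  filter_upwards [hmem] with ε hε
  exact (hsplit ε hε).symm

set_option maxHeartbeats 1000000 in
/-- Boundary-layer pairing limit: for well prepared families (uniformly bounded
`b_ε`-weighted `L²` norms, `u^ε → u₀` in `L²(Ω)`, boundary-layer averages converging to
`w⁰`, `w¹` in `L²(𝕋ⁿ)`), and `ε·φ(ε) → κ ∈ (0,∞)`, the pairing of `b_ε u^ε` against any
continuous function `f` on `𝕋ⁿ × [0,1]` converges to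
`∫_Ω u₀ f + κ∫ w⁰ f(·,0) + κ∫ w¹ f(·,1)`. -/
theorem boundary_layer_pairing_limit
    (n : ℕ) (hn : 1 ≤ n) (κ : ℝ) (hκ : 0 < κ)
    (φ : ℝ → ℝ) (hφ_pos : ∀ ε ∈ Set.Ioo (0:ℝ) (1/2), 0 < φ ε)
    (hφ_top : Filter.Tendsto φ (nhdsWithin 0 (Set.Ioo 0 (1/2))) Filter.atTop)
    (hφκ : Filter.Tendsto (fun ε => ε * φ ε) (nhdsWithin 0 (Set.Ioo 0 (1/2))) (nhds κ))
    (M : ℝ)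
    (u : ℝ → ((Fin n → ℝ) × ℝ) → ℝ)
    (hu_meas : ∀ ε ∈ Set.Ioo (0:ℝ) (1/2), Measurable (u ε))
    (hu_bdd : ∀ ε ∈ Set.Ioo (0:ℝ) (1/2),
      ∫⁻ p in cyl n, ENNReal.ofReal (bWt (φ ε) ε p * (u ε p) ^ 2) ≤ ENNReal.ofReal M)
    (u₀ : (Fin n → ℝ) × ℝ → ℝ) (hu₀_meas : Measurable u₀)
    (hu₀_L2 : ∫⁻ p in cyl n, ENNReal.ofReal ((u₀ p) ^ 2) < ⊤)
    (hu_conv : Filter.Tendsto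
      (fun ε => ∫⁻ p in cyl n, ENNReal.ofReal ((u ε p - u₀ p) ^ 2))
      (nhdsWithin 0 (Set.Ioo 0 (1/2))) (nhds 0))
    (w0 w1 : (Fin n → ℝ) → ℝ) (hw0_meas : Measurable w0) (hw1_meas : Measurable w1)
    (hw0_L2 : ∫⁻ x' in unitBox n, ENNReal.ofReal ((w0 x') ^ 2) < ⊤)
    (hw1_L2 : ∫⁻ x' in unitBox n, ENNReal.ofReal ((w1 x') ^ 2) < ⊤)
    (havg0 : Filter.Tendsto
      (fun ε => ∫⁻ x' in unitBox n,
        ENNReal.ofReal (((1/ε) * (∫ s in Set.Ioc (0:ℝ) ε, u ε (x', s)) - w0 x') ^ 2))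
      (nhdsWithin 0 (Set.Ioo 0 (1/2))) (nhds 0))
    (havg1 : Filter.Tendsto
      (fun ε => ∫⁻ x' in unitBox n,
        ENNReal.ofReal (((1/ε) * (∫ s in Set.Ioc (1 - ε) 1, u ε (x', s)) - w1 x') ^ 2))
      (nhdsWithin 0 (Set.Ioo 0 (1/2))) (nhds 0))
    (f : (Fin n → ℝ) × ℝ → ℝ) (hf : Continuous f)
    (hf_per : ∀ (p : (Fin n → ℝ) × ℝ) (i : Fin n), f (p.1 + Pi.single i 1, p.2) = f p) :
    Filter.Tendsto
      (fun ε => ∫ p in cyl n, bWt (φ ε) ε p * u ε p * f p)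
      (nhdsWithin 0 (Set.Ioo 0 (1/2)))
      (nhds ((∫ p in cyl n, u₀ p * f p)
        + κ * (∫ x' in unitBox n, w0 x' * f (x', 0))
        + κ * (∫ x' in unitBox n, w1 x' * f (x', 1)))) := by
  have hmem : ∀ᶠ ε in nhdsWithin (0:ℝ) (Set.Ioo 0 (1/2)), ε ∈ Set.Ioo (0:ℝ) (1/2) :=
    self_mem_nhdsWithin
  set Mp := max M 0 with hMpdef
  have hMp : 0 ≤ Mp := le_max_right _ _
  have hbd' : ∀ ε ∈ Set.Ioo (0:ℝ) (1/2),
      ∫⁻ p in cyl n, ENNReal.ofReal (bWt (φ ε) ε p * (u ε p) ^ 2) ≤ ENNReal.ofReal Mp :=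
    fun ε hε => (hu_bdd ε hε).trans (ENNReal.ofReal_le_ofReal (le_max_left _ _))
  have hbmeas : ∀ (c ε : ℝ), Measurable (fun p : (Fin n → ℝ) × ℝ => bWt c ε p) := by
    intro c ε
    unfold bWt
    exact Measurable.ite
      (measurableSet_le measurable_const
        (measurable_snd.min (measurable_const.sub measurable_snd)))
      measurable_const measurable_const
  have hcylvol : volume (cyl n) = 1 := by
    rw [cyl, volume_boxprod, Real.volume_Ioo]; simp
  have hcylmeas : MeasurableSet (cyl n) := (measurableSet_unitBox n).prod measurableSet_Ioo
  -- weighted L² bound on sub-layers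
  have hlayer : ∀ ε ∈ Set.Ioo (0:ℝ) (1/2), ∀ s : Set ℝ, s ⊆ Set.Ioo (0:ℝ) 1 →
      (∀ y ∈ s, min y (1-y) < ε) →
      ∫⁻ p in unitBox n ×ˢ s, ENNReal.ofReal ((u ε p) ^ 2) ≤ ENNReal.ofReal (Mp / φ ε) := by
    intro ε hε s hs hsmin
    have hφε := hφ_pos ε hε
    have step1 : ∫⁻ p in unitBox n ×ˢ s, ENNReal.ofReal ((u ε p) ^ 2)
        ≤ ∫⁻ p in unitBox n ×ˢ s,
            ENNReal.ofReal ((φ ε)⁻¹) * ENNReal.ofReal (bWt (φ ε) ε p * (u ε p) ^ 2) := by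
      refine setLIntegral_mono
        (measurable_const.mul
          (((hbmeas _ _).mul ((hu_meas ε hε).pow measurable_const)).ennreal_ofReal)) ?_
      intro p hp
      have hb : bWt (φ ε) ε p = φ ε := if_neg (not_le.2 (hsmin p.2 hp.2))
      rw [← ENNReal.ofReal_mul (inv_nonneg.2 hφε.le), hb]
      refine ENNReal.ofReal_le_ofReal (le_of_eq ?_)
      rw [← mul_assoc, inv_mul_cancel₀ (ne_of_gt hφε), one_mul]
    have step2 : ∫⁻ p in unitBox n ×ˢ s,
          ENNReal.ofReal ((φ ε)⁻¹) * ENNReal.ofReal (bWt (φ ε) ε p * (u ε p) ^ 2)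
        = ENNReal.ofReal ((φ ε)⁻¹)
            * ∫⁻ p in unitBox n ×ˢ s, ENNReal.ofReal (bWt (φ ε) ε p * (u ε p) ^ 2) :=
      lintegral_const_mul' _ _ (by simp)
    have step3 : ∫⁻ p in unitBox n ×ˢ s, ENNReal.ofReal (bWt (φ ε) ε p * (u ε p) ^ 2)
        ≤ ENNReal.ofReal Mp :=
      le_trans (lintegral_mono_set (Set.prod_mono_right hs)) (hbd' ε hε)
    calc ∫⁻ p in unitBox n ×ˢ s, ENNReal.ofReal ((u ε p) ^ 2)
        ≤ ENNReal.ofReal ((φ ε)⁻¹)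
            * ∫⁻ p in unitBox n ×ˢ s, ENNReal.ofReal (bWt (φ ε) ε p * (u ε p) ^ 2) := by
          rw [← step2]; exact step1
      _ ≤ ENNReal.ofReal ((φ ε)⁻¹) * ENNReal.ofReal Mp := mul_le_mul_right step3 _
      _ = ENNReal.ofReal (Mp / φ ε) := by
          rw [← ENNReal.ofReal_mul (inv_nonneg.2 hφε.le), inv_mul_eq_div]
  -- bottom layer
  obtain ⟨hJ0zero, hJ0conv⟩ := layer_limit n hκ hφ_pos hφκ hMp hu_meas
    (a := fun _ => (0:ℝ)) (b := fun ε => ε) (t := 0) ⟨le_refl 0, zero_le_one⟩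
    (fun ε hε y hy => ⟨hy.1.le, by have h1 := hε.2; have h2 := hy.2; linarith⟩)
    (fun ε hε => by simp)
    (fun ε hε s hs => by rw [sub_zero, abs_of_nonneg hs.1.le]; exact hs.2.le)
    (fun ε hε => hlayer ε hε _
      (fun y hy => ⟨hy.1, lt_trans hy.2 (by linarith [hε.2])⟩)
      (fun y hy => lt_of_le_of_lt (min_le_left _ _) hy.2))
    hw0_meas hw0_L2 havg0 hf
  -- top layer
  have hsub_top : ∀ ε ∈ Set.Ioo (0:ℝ) (1/2), Set.Ioo (1 - ε) 1 ⊆ Set.Icc (0:ℝ) 1 := by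
    intro ε hε y hy
    have h1 : 1 - ε < y := hy.1
    have h3 : ε < 1/2 := hε.2
    exact ⟨by linarith, hy.2.le⟩
  have hdist_top : ∀ ε ∈ Set.Ioo (0:ℝ) (1/2), ∀ s ∈ Set.Ioo (1 - ε) 1, |s - 1| ≤ ε := by
    intro ε hε s hs
    have h1 : 1 - ε < s := hs.1
    have h2 : s < 1 := hs.2
    rw [abs_of_nonpos (by linarith)]
    linarith
  have hL2_top : ∀ ε ∈ Set.Ioo (0:ℝ) (1/2),
      ∫⁻ p in unitBox n ×ˢ Set.Ioo (1 - ε) 1, ENNReal.ofReal ((u ε p) ^ 2)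
        ≤ ENNReal.ofReal (Mp / φ ε) := by
    intro ε hε
    refine hlayer ε hε _ (fun y hy => ?_) (fun y hy => ?_)
    · have h1 : 1 - ε < y := hy.1
      have h3 : ε < 1/2 := hε.2
      exact ⟨by linarith, hy.2⟩
    · have h1 : 1 - ε < y := hy.1
      exact lt_of_le_of_lt (min_le_right _ _) (by linarith)
  obtain ⟨hJ1zero, hJ1conv⟩ := layer_limit n hκ hφ_pos hφκ hMp hu_meas
    (a := fun ε => 1 - ε) (b := fun _ => (1:ℝ)) (t := 1) ⟨zero_le_one, le_refl 1⟩
    hsub_top (fun ε hε => by ring) hdist_top hL2_top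
    hw1_meas hw1_L2 havg1 hf
  -- integrability of u ε on the cylinder
  have hucyl : ∀ ε ∈ Set.Ioo (0:ℝ) (1/2), IntegrableOn (u ε) (cyl n) := by
    intro ε hε
    have hφε := hφ_pos ε hε
    have hm : 0 < min 1 (φ ε) := lt_min one_pos hφε
    have step1 : ∫⁻ p in cyl n, ENNReal.ofReal ((u ε p)^2)
        ≤ ∫⁻ p in cyl n, ENNReal.ofReal ((min 1 (φ ε))⁻¹)
            * ENNReal.ofReal (bWt (φ ε) ε p * (u ε p)^2) := by
      refine setLIntegral_mono (measurable_const.mul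
        (((hbmeas _ _).mul ((hu_meas ε hε).pow measurable_const)).ennreal_ofReal)) ?_
      intro p _
      rw [← ENNReal.ofReal_mul (inv_nonneg.2 hm.le)]
      refine ENNReal.ofReal_le_ofReal ?_
      have hbge : min 1 (φ ε) ≤ bWt (φ ε) ε p := by
        unfold bWt; split
        · exact min_le_left _ _
        · exact min_le_right _ _
      calc (u ε p)^2 = (min 1 (φ ε))⁻¹ * (min 1 (φ ε) * (u ε p)^2) := by
            rw [← mul_assoc, inv_mul_cancel₀ hm.ne', one_mul]
        _ ≤ (min 1 (φ ε))⁻¹ * (bWt (φ ε) ε p * (u ε p)^2) :=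
            mul_le_mul_of_nonneg_left
              (mul_le_mul_of_nonneg_right hbge (sq_nonneg _)) (inv_nonneg.2 hm.le)
    have step2 : ∫⁻ p in cyl n, ENNReal.ofReal ((min 1 (φ ε))⁻¹)
          * ENNReal.ofReal (bWt (φ ε) ε p * (u ε p)^2)
        = ENNReal.ofReal ((min 1 (φ ε))⁻¹)
          * ∫⁻ p in cyl n, ENNReal.ofReal (bWt (φ ε) ε p * (u ε p)^2) :=
      lintegral_const_mul' _ _ (by simp)
    refine integrable_of_sq ((hu_meas ε hε).aemeasurable) ?_ ?_
    · refine ne_top_of_le_ne_top ?_ step1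
      rw [step2]
      exact ENNReal.mul_ne_top (by simp)
        (ne_top_of_le_ne_top (by simp) (hbd' ε hε))
    · rw [Measure.restrict_apply_univ, hcylvol]; simp
  -- bound for f
  have hKcp : IsCompact (Set.Icc (0:Fin n → ℝ) 1 ×ˢ Set.Icc (0:ℝ) 1) :=
    isCompact_Icc.prod isCompact_Icc
  obtain ⟨C0, hC0⟩ := hKcp.exists_bound_of_continuousOn hf.continuousOn
  set C := max C0 0 with hCdef
  have hC : 0 ≤ C := le_max_right _ _
  have hfK : ∀ p ∈ Set.Icc (0:Fin n → ℝ) 1 ×ˢ Set.Icc (0:ℝ) 1, |f p| ≤ C :=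
    fun p hp => le_trans (by simpa [Real.norm_eq_abs] using hC0 p hp) (le_max_left _ _)
  have hcylK : cyl n ⊆ Set.Icc (0:Fin n → ℝ) 1 ×ˢ Set.Icc (0:ℝ) 1 :=
    fun p hp => ⟨unitBox_subset_Icc n hp.1, ⟨hp.2.1.le, hp.2.2.le⟩⟩
  have hfae : ∀ᵐ p ∂(volume.restrict (cyl n)), |f p| ≤ C :=
    ae_restrict_of_forall_mem hcylmeas (fun p hp => hfK p (hcylK hp))
  have hufcyl : ∀ ε ∈ Set.Ioo (0:ℝ) (1/2),
      IntegrableOn (fun p => u ε p * f p) (cyl n) :=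
    fun ε hε => (hucyl ε hε).mul_bdd_abs hf.aestronglyMeasurable.restrict hfae
  have hu₀cyl : IntegrableOn u₀ (cyl n) :=
    integrable_of_sq hu₀_meas.aemeasurable hu₀_L2.ne
      (by rw [Measure.restrict_apply_univ, hcylvol]; simp)
  have hu₀f : IntegrableOn (fun p => u₀ p * f p) (cyl n) :=
    hu₀cyl.mul_bdd_abs hf.aestronglyMeasurable.restrict hfae
  -- G1 tendsto
  have hdiff0 : Filter.Tendsto (fun ε => ∫ p in cyl n, (u ε p - u₀ p) * f p)
      (nhdsWithin 0 (Set.Ioo 0 (1/2))) (nhds 0) := by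
    have htR : Filter.Tendsto
        (fun ε => (∫⁻ p in cyl n, ENNReal.ofReal ((u ε p - u₀ p) ^ 2)).toReal)
        (nhdsWithin 0 (Set.Ioo 0 (1/2))) (nhds 0) := by
      have := (ENNReal.tendsto_toReal (a := 0) (by simp)).comp hu_conv
      exact this
    have hlim : Filter.Tendsto (fun ε => C * Real.sqrt
        ((∫⁻ p in cyl n, ENNReal.ofReal ((u ε p - u₀ p) ^ 2)).toReal * 1))
        (nhdsWithin 0 (Set.Ioo 0 (1/2))) (nhds (C * Real.sqrt ((0:ℝ) * 1))) :=
      tendsto_const_nhds.mul ((htR.mul tendsto_const_nhds).sqrt)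
    have h00 : C * Real.sqrt ((0:ℝ) * 1) = 0 := by simp
    refine squeeze_zero_norm' ?_ (h00 ▸ hlim)
    have hfin : ∀ᶠ ε in nhdsWithin (0:ℝ) (Set.Ioo 0 (1/2)),
        (∫⁻ p in cyl n, ENNReal.ofReal ((u ε p - u₀ p) ^ 2)) < ⊤ :=
      hu_conv.eventually_lt_const (by simp)
    filter_upwards [hmem, hfin] with ε hε hfinε
    rw [Real.norm_eq_abs]
    refine cs_bound (volume.restrict (cyl n)) (h := fun p => u ε p - u₀ p) (g := f)
      (A := (∫⁻ p in cyl n, ENNReal.ofReal ((u ε p - u₀ p) ^ 2)).toReal) (V := 1)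
      (((hu_meas ε hε).sub hu₀_meas).aemeasurable)
      ENNReal.toReal_nonneg hC zero_le_one ?_ ?_ hfae
    · rw [ENNReal.ofReal_toReal hfinε.ne]
    · rw [Measure.restrict_apply_univ, hcylvol]; simp
  have hG1 : Filter.Tendsto (fun ε => ∫ p in cyl n, u ε p * f p)
      (nhdsWithin 0 (Set.Ioo 0 (1/2))) (nhds (∫ p in cyl n, u₀ p * f p)) := by
    have heq : ∀ᶠ ε in nhdsWithin (0:ℝ) (Set.Ioo 0 (1/2)),
        (∫ p in cyl n, (u ε p - u₀ p) * f p) + (∫ p in cyl n, u₀ p * f p)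
          = ∫ p in cyl n, u ε p * f p := by
      filter_upwards [hmem] with ε hε
      have e2 : (∫ p in cyl n, (u ε p - u₀ p) * f p)
          = (∫ p in cyl n, u ε p * f p) - ∫ p in cyl n, u₀ p * f p := by
        rw [← integral_sub (hufcyl ε hε) hu₀f]
        exact setIntegral_congr_fun hcylmeas (fun p _ => by ring)
      rw [e2]; ring
    simpa using (hdiff0.add tendsto_const_nhds).congr' heq
  -- splitting identity
  have hIsplit : ∀ ε ∈ Set.Ioo (0:ℝ) (1/2),
      (∫ p in cyl n, bWt (φ ε) ε p * u ε p * f p)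
        = (∫ p in cyl n, u ε p * f p)
          + (φ ε - 1) * ((∫ p in unitBox n ×ˢ Set.Ioo (0:ℝ) ε, u ε p * f p)
            + (∫ p in unitBox n ×ˢ Set.Ioo (1 - ε) 1, u ε p * f p)) := by
    intro ε hε
    set Lset : Set ((Fin n → ℝ) × ℝ) := {p | min p.2 (1 - p.2) < ε} with hLdef
    have hLmeas : MeasurableSet Lset :=
      measurableSet_lt (measurable_snd.min (measurable_const.sub measurable_snd))
        measurable_const
    have hpt : ∀ p, bWt (φ ε) ε p * u ε p * f p
        = u ε p * f p + (φ ε - 1) * Lset.indicator (fun q => u ε q * f q) p := by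
      intro p
      by_cases h : ε ≤ min p.2 (1 - p.2)
      · rw [Set.indicator_of_notMem (by simpa [hLdef] using not_lt.2 h)]
        unfold bWt; rw [if_pos h]; ring
      · rw [Set.indicator_of_mem (show p ∈ Lset from not_le.1 h)]
        unfold bWt; rw [if_neg h]; ring
    have hind : IntegrableOn (Lset.indicator (fun q => u ε q * f q)) (cyl n) :=
      (hufcyl ε hε).indicator hLmeas
    have hset : cyl n ∩ Lset
        = (unitBox n ×ˢ Set.Ioo (0:ℝ) ε) ∪ (unitBox n ×ˢ Set.Ioo (1 - ε) 1) := by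
      ext p
      simp only [cyl, Set.mem_inter_iff, Set.mem_prod, Set.mem_Ioo, Set.mem_union,
        hLdef, Set.mem_setOf_eq, min_lt_iff]
      constructor
      · rintro ⟨⟨hb, h0, h1⟩, hm | hm⟩
        · exact Or.inl ⟨hb, h0, hm⟩
        · exact Or.inr ⟨hb, by linarith, h1⟩
      · rintro (⟨hb, h0, h1⟩ | ⟨hb, h0, h1⟩)
        · exact ⟨⟨hb, h0, by linarith [hε.2]⟩, Or.inl h1⟩
        · exact ⟨⟨hb, by linarith [hε.1, hε.2], h1⟩, Or.inr (by linarith)⟩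
    have hdisj : Disjoint (unitBox n ×ˢ Set.Ioo (0:ℝ) ε) (unitBox n ×ˢ Set.Ioo (1 - ε) 1) := by
      rw [Set.disjoint_left]
      rintro p ⟨_, h1⟩ ⟨_, h2⟩
      have ha := h1.2
      have hb := h2.1
      have hc := hε.2
      linarith
    have hintL0 : IntegrableOn (fun p => u ε p * f p) (unitBox n ×ˢ Set.Ioo (0:ℝ) ε) :=
      (hufcyl ε hε).mono_set
        (Set.prod_mono_right (fun y hy => ⟨hy.1, by have := hy.2; have := hε.2; linarith⟩))
    have hintL1 : IntegrableOn (fun p => u ε p * f p) (unitBox n ×ˢ Set.Ioo (1 - ε) 1) :=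
      (hufcyl ε hε).mono_set
        (Set.prod_mono_right (fun y hy => ⟨by have := hy.1; have := hε.2; linarith, hy.2⟩))
    calc (∫ p in cyl n, bWt (φ ε) ε p * u ε p * f p)
        = ∫ p in cyl n, (u ε p * f p + (φ ε - 1) * Lset.indicator (fun q => u ε q * f q) p) :=
          setIntegral_congr_fun hcylmeas (fun p _ => hpt p)
      _ = (∫ p in cyl n, u ε p * f p)
          + ∫ p in cyl n, (φ ε - 1) * Lset.indicator (fun q => u ε q * f q) p :=
          integral_add (hufcyl ε hε) (hind.const_mul _)
      _ = (∫ p in cyl n, u ε p * f p)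
          + (φ ε - 1) * ∫ p in cyl n, Lset.indicator (fun q => u ε q * f q) p := by
          rw [integral_const_mul]
      _ = (∫ p in cyl n, u ε p * f p)
          + (φ ε - 1) * ∫ p in cyl n ∩ Lset, u ε p * f p := by
          rw [setIntegral_indicator hLmeas]
      _ = (∫ p in cyl n, u ε p * f p)
          + (φ ε - 1) * ((∫ p in unitBox n ×ˢ Set.Ioo (0:ℝ) ε, u ε p * f p)
            + (∫ p in unitBox n ×ˢ Set.Ioo (1 - ε) 1, u ε p * f p)) := by
          rw [hset, setIntegral_union hdisj ((measurableSet_unitBox n).prod measurableSet_Ioo)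
            hintL0 hintL1]
  -- combine
  have hcomb := hG1.add ((hJ0conv.sub hJ0zero).add (hJ1conv.sub hJ1zero))
  rw [show (∫ p in cyl n, u₀ p * f p)
      + ((κ * (∫ x' in unitBox n, w0 x' * f (x', 0)) - 0)
        + (κ * (∫ x' in unitBox n, w1 x' * f (x', 1)) - 0))
      = (∫ p in cyl n, u₀ p * f p) + κ * (∫ x' in unitBox n, w0 x' * f (x', 0))
        + κ * (∫ x' in unitBox n, w1 x' * f (x', 1)) from by ring] at hcomb
  refine hcomb.congr' ?_
  filter_upwards [hmem] with ε hε
  beta_reduce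
  rw [hIsplit ε hε]
  ring
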